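/- Assume T is an ℝ-embeddable tree such that the Banach space C₀(T) is σ-fragmentable. Then T is Q-embeddable (special). -/

import Mathlib

open Filter Topology Set

universe u v

/-- A tree in the sense of the paper: a partial order with a minimal element `⊥`,
binary greatest lower bounds, and each set of predecessors `[0,t)` well ordered
(a linearly ordered, well-founded chain). -/
class TreeOrder (T : Type u) extends SemilatticeInf T, OrderBot T where
  chain_lt : ∀ t : T, IsChain (· ≤ ·) {x : T | x < t}
  isWF_lt : ∀ t : T, Set.IsWF {x : T | x < t}

/-- The interval topology, generated by the intervals `(s,t]` (together with the
initial intervals `[0,t]`, which make the root an interior point of `[0,t]`). -/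
def intervalTopology (T : Type u) [Preorder T] : TopologicalSpace T :=
  TopologicalSpace.generateFrom
    ({S : Set T | ∃ a b : T, S = Set.Ioc a b} ∪ {S : Set T | ∃ b : T, S = Set.Iic b})

instance TreeOrder.toTopologicalSpace (T : Type u) [TreeOrder T] : TopologicalSpace T :=
  intervalTopology T

/-- The weak topology of a real normed space. -/
def weakTop (X : Type u) [NormedAddCommGroup X] [NormedSpace ℝ X] : TopologicalSpace X :=
  ⨅ f : X →L[ℝ] ℝ, TopologicalSpace.induced f inferInstance

/-- σ-fragmentability in the sense of Jayne–Namioka–Rogers: for every `ε > 0` the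
space is a countable union of sets, each of which is fragmented down to `ε` by the
norm with respect to the weak topology. -/
def SigmaFragmentable (X : Type u) [NormedAddCommGroup X] [NormedSpace ℝ X] : Prop :=
  ∀ ε : ℝ, 0 < ε → ∃ A : ℕ → Set X, (⋃ n : ℕ, A n) = Set.univ ∧
    ∀ (n : ℕ) (S : Set X), S ⊆ A n → S.Nonempty →
      ∃ V : Set X, IsOpen[weakTop X] V ∧ (S ∩ V).Nonempty ∧ Metric.diam (S ∩ V) ≤ ε

namespace TreeProof

variable {T : Type u} [TreeOrder T]

/-- any two elements below a common element are comparable -/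
lemma comp_of_le {x y z : T} (hx : x ≤ z) (hy : y ≤ z) : x ≤ y ∨ y ≤ x := by
  rcases eq_or_lt_of_le hx with rfl | hx'
  · exact Or.inr hy
  rcases eq_or_lt_of_le hy with rfl | hy'
  · exact Or.inl hx
  rcases eq_or_ne x y with rfl | hne
  · exact Or.inl le_rfl
  rcases TreeOrder.chain_lt z hx' hy' hne with h | h
  · exact Or.inl h
  · exact Or.inr h

lemma isWF_Iic (t : T) : Set.IsWF (Set.Iic t) := by
  have h1 : Set.Iic t = insert t {x : T | x < t} := by
    ext x; simp [Set.mem_insert_iff, le_iff_lt_or_eq, or_comm, eq_comm]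
  rw [h1]
  exact (TreeOrder.isWF_lt t).insert t

lemma isWF_Ioc (s t : T) : Set.IsWF (Set.Ioc s t) :=
  (isWF_Iic t).mono (fun _ hx => hx.2)

open Classical in
/-- the "direction" from t towards u : the minimal element of (t, u]. -/
noncomputable def dmin (t u : T) : T :=
  if h : t < u then (isWF_Ioc t u).min (Set.nonempty_Ioc.2 h) else t

lemma dmin_mem {t u : T} (h : t < u) : dmin t u ∈ Set.Ioc t u := by
  classical
  rw [dmin, dif_pos h]; exact (isWF_Ioc t u).min_mem _

lemma dmin_le {t u x : T} (h : t < u) (hx : x ∈ Set.Ioc t u) : dmin t u ≤ x := by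
  classical
  have hnlt : ¬ x < dmin t u := by rw [dmin, dif_pos h]; exact (isWF_Ioc t u).not_lt_min _ hx
  rcases comp_of_le hx.2 (dmin_mem h).2 with h' | h'
  · rcases eq_or_lt_of_le h' with heq | h''
    · exact heq.ge
    · exact absurd h'' hnlt
  · exact h'

/-- disjointness of the half-open intervals towards points in distinct directions -/
lemma Ioc_disjoint {t u v : T} (hu : t < u) (hv : t < v) (hne : dmin t u ≠ dmin t v)
    {x : T} (hxu : x ∈ Set.Ioc t u) (hxv : x ∈ Set.Ioc t v) : False := by
  have h1 : dmin t u ≤ x := dmin_le hu hxu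
  have h2 : dmin t v ≤ x := dmin_le hv hxv
  rcases comp_of_le h1 h2 with h | h
  · have : dmin t v ≤ dmin t u := dmin_le hv ⟨(dmin_mem hu).1, h.trans (dmin_mem hv).2⟩
    exact hne (le_antisymm h this)
  · have : dmin t u ≤ dmin t v := dmin_le hu ⟨(dmin_mem hv).1, h.trans (dmin_mem hu).2⟩
    exact hne (le_antisymm this h)

end TreeProof

namespace TreeProof
variable {T : Type u} [TreeOrder T]

abbrev gens (T : Type u) [Preorder T] : Set (Set T) :=
  ({S : Set T | ∃ a b : T, S = Set.Ioc a b} ∪ {S : Set T | ∃ b : T, S = Set.Iic b})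

lemma isOpen_iff_gen {U : Set T} : IsOpen U ↔ TopologicalSpace.GenerateOpen (gens T) U :=
  Iff.rfl

lemma isOpen_Ioc' (a b : T) : IsOpen (Set.Ioc a b) :=
  isOpen_iff_gen.2 (TopologicalSpace.GenerateOpen.basic _ (Or.inl ⟨a, b, rfl⟩))

lemma isOpen_Iic' (b : T) : IsOpen (Set.Iic b) :=
  isOpen_iff_gen.2 (TopologicalSpace.GenerateOpen.basic _ (Or.inr ⟨b, rfl⟩))

/-- basic neighborhoods in the interval topology -/
lemma nbhd_basic {x : T} {U : Set T} (hU : IsOpen U) (hx : x ∈ U) :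
    (∃ a, a < x ∧ Set.Ioc a x ⊆ U) ∨ Set.Iic x ⊆ U := by
  rw [isOpen_iff_gen] at hU
  induction hU with
  | basic s hs =>
    rcases hs with ⟨a, b, rfl⟩ | ⟨b, rfl⟩
    · exact Or.inl ⟨a, hx.1, fun y hy => ⟨hy.1, hy.2.trans hx.2⟩⟩
    · exact Or.inr (fun y hy => hy.trans hx)
  | univ => exact Or.inr (fun y _ => trivial)
  | inter s t _ _ ihs iht =>
    rcases ihs hx.1 with ⟨a, ha, hsub⟩ | hsub
    · rcases iht hx.2 with ⟨a', ha', hsub'⟩ | hsub'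
      · rcases comp_of_le ha.le ha'.le with h | h
        · exact Or.inl ⟨a', ha', fun y hy => ⟨hsub ⟨lt_of_le_of_lt h hy.1, hy.2⟩, hsub' hy⟩⟩
        · exact Or.inl ⟨a, ha, fun y hy => ⟨hsub hy, hsub' ⟨lt_of_le_of_lt h hy.1, hy.2⟩⟩⟩
      · exact Or.inl ⟨a, ha, fun y hy => ⟨hsub hy, hsub' hy.2⟩⟩
    · rcases iht hx.2 with ⟨a', ha', hsub'⟩ | hsub'
      · exact Or.inl ⟨a', ha', fun y hy => ⟨hsub hy.2, hsub' hy⟩⟩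
      · exact Or.inr (fun y hy => ⟨hsub hy, hsub' hy⟩)
  | sUnion S _ ih =>
    rcases hx with ⟨s, hsS, hxs⟩
    rcases ih s hsS hxs with ⟨a, ha, hsub⟩ | hsub
    · exact Or.inl ⟨a, ha, fun y hy => ⟨s, hsS, hsub hy⟩⟩
    · exact Or.inr (fun y hy => ⟨s, hsS, hsub hy⟩)

lemma isOpen_compl_Iic (t : T) : IsOpen (Set.Iic t)ᶜ := by
  have : (Set.Iic t)ᶜ = ⋃ s : {s : T // ¬ s ≤ t}, Set.Ioc (s.1 ⊓ t) s.1 := by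
    ext x
    constructor
    · intro hx
      refine Set.mem_iUnion.2 ⟨⟨x, hx⟩, ?_, le_rfl⟩
      rcases lt_or_eq_of_le (inf_le_left : x ⊓ t ≤ x) with h | h
      · exact h
      · exact absurd (h ▸ inf_le_right) hx
    · intro hx
      rcases Set.mem_iUnion.1 hx with ⟨⟨s, hs⟩, hxs⟩
      intro hxt
      have h2 : x ≤ (s : T) ⊓ t := le_inf hxs.2 hxt
      exact absurd (lt_of_lt_of_le hxs.1 h2) (lt_irrefl _)
  rw [this]
  exact isOpen_iUnion (fun s => isOpen_Ioc' _ _)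

lemma isClopen_Iic (t : T) : IsClopen (Set.Iic t) :=
  ⟨⟨isOpen_compl_Iic t⟩, isOpen_Iic' t⟩

lemma isCompact_Iic (t : T) : IsCompact (Set.Iic t) := by
  classical
  refine isCompact_of_finite_subcover fun {ι} U hU hcov => ?_
  by_contra hcon
  push_neg at hcon
  set B : Set T := {x ∈ Set.Iic t | ∀ s : Finset ι, ¬ Set.Iic x ⊆ ⋃ i ∈ s, U i} with hB
  have hBne : B.Nonempty := ⟨t, le_rfl, fun s hs => hcon s hs⟩
  have hBsub : B ⊆ Set.Iic t := fun x hx => hx.1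
  have hwf : B.IsWF := (isWF_Iic t).mono hBsub
  set x₀ := hwf.min hBne with hx₀
  have hx₀B : x₀ ∈ B := hwf.min_mem hBne
  have hx₀t : x₀ ∈ Set.Iic t := hBsub hx₀B
  rcases Set.mem_iUnion.1 (hcov hx₀t) with ⟨i₀, hi₀⟩
  rcases nbhd_basic (hU i₀) hi₀ with ⟨a, ha, hsub⟩ | hsub
  · have haB : a ∉ B := fun haB => hwf.not_lt_min hBne haB ha
    have hat : a ∈ Set.Iic t := le_trans ha.le hx₀t
    have : ∃ s : Finset ι, Set.Iic a ⊆ ⋃ i ∈ s, U i := by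
      by_contra hc; push_neg at hc; exact haB ⟨hat, hc⟩
    rcases this with ⟨s, hs⟩
    refine hx₀B.2 (insert i₀ s) (fun y hy => ?_)
    have hcase : y ≤ a ∨ a < y := by
      rcases eq_or_lt_of_le hy with rfl | hylt
      · exact Or.inr ha
      · rcases comp_of_le hylt.le ha.le with h | h
        · exact Or.inl h
        · rcases eq_or_lt_of_le h with rfl | h'
          · exact Or.inl le_rfl
          · exact Or.inr h'
    rcases hcase with h | h
    · have := hs h
      simp only [Set.mem_iUnion] at this ⊢
      rcases this with ⟨i, hi, hyi⟩
      exact ⟨i, Finset.mem_insert_of_mem hi, hyi⟩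
    · simp only [Set.mem_iUnion]
      exact ⟨i₀, Finset.mem_insert_self _ _, hsub ⟨h, hy⟩⟩
  · refine hx₀B.2 {i₀} (fun y hy => ?_)
    simp only [Set.mem_iUnion]
    exact ⟨i₀, Finset.mem_singleton_self _, hsub hy⟩

end TreeProof

namespace TreeProof
attribute [local instance 10] Classical.propDecidable
variable {T : Type u} [TreeOrder T]

lemma isOpen_preimage_ind (t : T) (s : Set ℝ) :
    IsOpen ((fun x => if x ≤ t then (1:ℝ) else 0) ⁻¹' s) := by
  classical
  have : ((fun x => if x ≤ t then (1:ℝ) else 0) ⁻¹' s) =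
      (if (1:ℝ) ∈ s then Set.Iic t else ∅) ∪ (if (0:ℝ) ∈ s then (Set.Iic t)ᶜ else ∅) := by
    ext x
    by_cases hx : x ≤ t <;> by_cases h1 : (1:ℝ) ∈ s <;> by_cases h0 : (0:ℝ) ∈ s <;>
      simp [hx, h1, h0, Set.mem_preimage]
  rw [this]
  apply IsOpen.union <;> split_ifs <;>
    first
      | exact isOpen_Iic' t
      | exact isOpen_compl_Iic t
      | exact isOpen_empty

/-- The indicator of `[0,t]` as an element of `C₀(T,ℝ)`. -/
noncomputable def e (t : T) : ZeroAtInftyContinuousMap T ℝ where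
  toFun := fun x => if x ≤ t then (1:ℝ) else 0
  continuous_toFun := by
    rw [continuous_def]; exact fun s _ => isOpen_preimage_ind t s
  zero_at_infty' := by
    have hev : ∀ᶠ x in Filter.cocompact T, (fun x => if x ≤ t then (1:ℝ) else 0) x = 0 := by
      have hmem : (Set.Iic t)ᶜ ∈ Filter.cocompact T :=
        Filter.mem_cocompact.2 ⟨Set.Iic t, isCompact_Iic t, le_rfl⟩
      refine Filter.mem_of_superset hmem (fun x hx => ?_)
      simp only [Set.mem_compl_iff, Set.mem_Iic] at hx
      simp [hx]
    exact Filter.Tendsto.congr' (Filter.EventuallyEq.symm hev) tendsto_const_nhds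

lemma e_apply (t x : T) : e t x = if x ≤ t then (1:ℝ) else 0 := rfl

lemma dist_apply_le (g h : ZeroAtInftyContinuousMap T ℝ) (x : T) :
    dist (g x) (h x) ≤ dist g h := by
  have h1 : dist g.toBCF h.toBCF = dist g h :=
    ZeroAtInftyContinuousMap.dist_toBCF_eq_dist
  rw [← h1]
  exact BoundedContinuousFunction.dist_coe_le_dist (f := g.toBCF) (g := h.toBCF) x

lemma one_le_dist_e {s t : T} (hne : s ≠ t) : 1 ≤ dist (e s) (e t) := by
  have key : ∀ a b : T, ¬ a ≤ b → 1 ≤ dist (e a) (e b) := by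
    intro a b hab
    have h1 : e a a = 1 := by rw [e_apply, if_pos le_rfl]
    have h0 : e b a = 0 := by rw [e_apply, if_neg hab]
    calc (1:ℝ) = dist (e a a) (e b a) := by rw [h1, h0]; simp [Real.dist_eq]
    _ ≤ dist (e a) (e b) := dist_apply_le _ _ _
  rcases (not_and_or.1 (fun hc => hne (le_antisymm hc.1 hc.2))) with h | h
  · exact key s t h
  · rw [dist_comm]; exact key t s h

lemma e_injective : Function.Injective (e : T → ZeroAtInftyContinuousMap T ℝ) := by
  intro s t hst
  by_contra hne
  have := one_le_dist_e hne
  rw [hst, dist_self] at this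
  linarith

/-- the block function: `e u - e t` is the indicator of `Ioc t u`. -/
lemma block_apply {t u : T} (htu : t < u) (x : T) :
    (e u - e t) x = if x ∈ Set.Ioc t u then (1:ℝ) else 0 := by
  have hx : (e u - e t) x = e u x - e t x := by
    rw [ZeroAtInftyContinuousMap.coe_sub]; rfl
  rw [hx, e_apply, e_apply]
  by_cases h1 : x ≤ t
  · have h2 : x ≤ u := h1.trans htu.le
    have h3 : x ∉ Set.Ioc t u := fun hc => absurd (lt_of_lt_of_le hc.1 h1) (lt_irrefl _)
    simp [h1, h2, h3]
  · by_cases h2 : x ≤ u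
    · have h3 : t < x := by
        rcases comp_of_le htu.le h2 with h | h
        · exact lt_of_le_of_ne h (fun hc => h1 (hc ▸ le_rfl))
        · exact absurd h h1
      simp [h1, h2, Set.mem_Ioc, h3]
    · have h3 : x ∉ Set.Ioc t u := fun hc => h2 hc.2
      simp [h1, h2, h3]

lemma coe_finset_sum {ι : Type*} (K : Finset ι) (F : ι → ZeroAtInftyContinuousMap T ℝ) (x : T) :
    (∑ k ∈ K, F k) x = ∑ k ∈ K, F k x := by
  classical
  induction K using Finset.induction with
  | empty => simp [ZeroAtInftyContinuousMap.coe_zero]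
  | insert _ _ hne ih =>
    rw [Finset.sum_insert hne, Finset.sum_insert hne, ZeroAtInftyContinuousMap.coe_add, Pi.add_apply, ih]

/-- norm of a signed sum of disjoint blocks is at most 1 -/
lemma norm_signed_block_sum_le (t : T) (K : Finset ℕ) (u : ℕ → T) (sg : ℕ → ℝ)
    (hu : ∀ k ∈ K, t < u k)
    (hdisj : ∀ k ∈ K, ∀ j ∈ K, k ≠ j → dmin t (u k) ≠ dmin t (u j))
    (hsg : ∀ k, |sg k| ≤ 1) :
    ‖∑ k ∈ K, sg k • (e (u k) - e t)‖ ≤ 1 := by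
  classical
  rw [← ZeroAtInftyContinuousMap.norm_toBCF_eq_norm]
  refine BoundedContinuousFunction.norm_le zero_le_one |>.2 (fun x => ?_)
  have hx : (∑ k ∈ K, sg k • (e (u k) - e t)).toBCF x = ∑ k ∈ K, sg k * ((e (u k) - e t) x) := by
    have := coe_finset_sum K (fun k => sg k • (e (u k) - e t)) x
    simpa [ZeroAtInftyContinuousMap.coe_smul, smul_eq_mul] using this
  rw [hx]
  by_cases hex : ∃ k ∈ K, x ∈ Set.Ioc t (u k)
  · rcases hex with ⟨k₀, hk₀K, hk₀⟩
    have hsum : ∑ k ∈ K, sg k * ((e (u k) - e t) x) = sg k₀ * ((e (u k₀) - e t) x) := by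
      refine Finset.sum_eq_single_of_mem k₀ hk₀K (fun j hjK hjne => ?_)
      have : x ∉ Set.Ioc t (u j) := by
        intro hc
        exact Ioc_disjoint (hu j hjK) (hu k₀ hk₀K) (hdisj j hjK k₀ hk₀K hjne) hc hk₀
      rw [block_apply (hu j hjK), if_neg this, mul_zero]
    rw [hsum, block_apply (hu k₀ hk₀K), if_pos hk₀, mul_one]
    simpa [Real.norm_eq_abs] using hsg k₀
  · push_neg at hex
    have hsum : ∑ k ∈ K, sg k * ((e (u k) - e t) x) = 0 := by
      refine Finset.sum_eq_zero (fun j hjK => ?_)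
      rw [block_apply (hu j hjK), if_neg (hex j hjK), mul_zero]
    rw [hsum]; simp

/-- the ℓ¹ estimate for functionals against disjoint blocks -/
lemma l1_estimate (t : T) (K : Finset ℕ) (u : ℕ → T)
    (hu : ∀ k ∈ K, t < u k)
    (hdisj : ∀ k ∈ K, ∀ j ∈ K, k ≠ j → dmin t (u k) ≠ dmin t (u j))
    (φ : ZeroAtInftyContinuousMap T ℝ →L[ℝ] ℝ) :
    ∑ k ∈ K, |φ (e (u k) - e t)| ≤ ‖φ‖ := by
  classical
  set sg : ℕ → ℝ := fun k => if 0 ≤ φ (e (u k) - e t) then 1 else -1 with hsg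
  have habs : ∀ k, |φ (e (u k) - e t)| = sg k * φ (e (u k) - e t) := by
    intro k
    by_cases h : 0 ≤ φ (e (u k) - e t)
    · have hk : sg k = 1 := by simp only [hsg]; rw [if_pos h]
      rw [abs_of_nonneg h, hk, one_mul]
    · have hk : sg k = -1 := by simp only [hsg]; rw [if_neg h]
      rw [abs_of_neg (lt_of_not_ge h), hk]; ring
  calc ∑ k ∈ K, |φ (e (u k) - e t)| = ∑ k ∈ K, φ (sg k • (e (u k) - e t)) := by
        refine Finset.sum_congr rfl (fun k _ => ?_)
        rw [habs k, map_smul, smul_eq_mul]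
  _ = φ (∑ k ∈ K, sg k • (e (u k) - e t)) := by rw [map_sum]
  _ ≤ |φ (∑ k ∈ K, sg k • (e (u k) - e t))| := le_abs_self _
  _ ≤ ‖φ‖ * ‖∑ k ∈ K, sg k • (e (u k) - e t)‖ := φ.le_opNorm _
  _ ≤ ‖φ‖ * 1 := by
        have h1 : ‖∑ k ∈ K, sg k • (e (u k) - e t)‖ ≤ 1 := by
          refine norm_signed_block_sum_le t K u sg hu hdisj (fun k => ?_)
          simp only [hsg]
          by_cases h : 0 ≤ φ (e (u k) - e t) <;> split_ifs <;> simp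
        exact mul_le_mul_of_nonneg_left h1 φ.opNorm_nonneg
  _ = ‖φ‖ := mul_one _

end TreeProof

namespace TreeProof
attribute [local instance 10] Classical.propDecidable
variable {T : Type u} [TreeOrder T]

local notation "X" => ZeroAtInftyContinuousMap T ℝ

lemma weak_nbhd {V : Set (ZeroAtInftyContinuousMap T ℝ)} {x : ZeroAtInftyContinuousMap T ℝ}
    (hV : IsOpen[weakTop (ZeroAtInftyContinuousMap T ℝ)] V) (hx : x ∈ V) :
    ∃ (m : ℕ) (φs : Fin m → ((ZeroAtInftyContinuousMap T ℝ) →L[ℝ] ℝ)) (δ : Fin m → ℝ),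
      (∀ i, 0 < δ i) ∧ ∀ y, (∀ i, |φs i y - φs i x| < δ i) → y ∈ V := by
  classical
  have hmem : V ∈ @nhds _ (⨅ φ : (ZeroAtInftyContinuousMap T ℝ) →L[ℝ] ℝ,
      TopologicalSpace.induced φ inferInstance) x := by
    letI : TopologicalSpace (ZeroAtInftyContinuousMap T ℝ) :=
      ⨅ φ : (ZeroAtInftyContinuousMap T ℝ) →L[ℝ] ℝ, TopologicalSpace.induced φ inferInstance
    exact IsOpen.mem_nhds hV hx
  rw [_root_.nhds_iInf] at hmem
  rw [Filter.mem_iInf] at hmem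
  obtain ⟨I, hIfin, W, hW, rfl⟩ := hmem
  have : ∀ i : I, ∃ δ : ℝ, 0 < δ ∧ ∀ y, |(i : _ →L[ℝ] ℝ) y - (i : _ →L[ℝ] ℝ) x| < δ → y ∈ W i := by
    intro i
    have hWi := hW i
    rw [nhds_induced, Filter.mem_comap] at hWi
    obtain ⟨U, hU, hUsub⟩ := hWi
    rw [Metric.mem_nhds_iff] at hU
    obtain ⟨δ, hδ, hball⟩ := hU
    refine ⟨δ, hδ, fun y hy => ?_⟩
    apply hUsub
    apply hball
    rw [Metric.mem_ball, Real.dist_eq]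
    exact hy
  choose δ hδpos hδ using this
  haveI : Fintype I := hIfin.fintype
  set m := Fintype.card I with hm
  set eqv := (Fintype.equivFin I).symm with heqv
  refine ⟨m, fun j => (eqv j : _), fun j => δ (eqv j), fun j => hδpos _, fun y hy => ?_⟩
  rw [Set.mem_iInter]
  intro i
  exact hδ i y (by simpa [heqv] using hy ((Fintype.equivFin I) i))

lemma norm_e_le_one (t : T) : ‖e t‖ ≤ 1 := by
  rw [← ZeroAtInftyContinuousMap.norm_toBCF_eq_norm]
  refine (BoundedContinuousFunction.norm_le zero_le_one).2 (fun x => ?_)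
  have : (e t).toBCF x = if x ≤ t then (1:ℝ) else 0 := rfl
  rw [this]
  split_ifs <;> simp

/-- The key combinatorial consequence of fragmentability: every nonempty subset of a
fragmentable class contains a point with only finitely many directions towards
points of the set above it. -/
lemma slim_point (A : Set (ZeroAtInftyContinuousMap T ℝ))
    (hfrag : ∀ S : Set (ZeroAtInftyContinuousMap T ℝ), S ⊆ A → S.Nonempty →
      ∃ V, IsOpen[weakTop (ZeroAtInftyContinuousMap T ℝ)] V ∧ (S ∩ V).Nonempty ∧
        Metric.diam (S ∩ V) ≤ 1/2)
    (W : Set T) (hW : ∀ t ∈ W, e t ∈ A) (hne : W.Nonempty) :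
    ∃ t ∈ W, {x : T | ∃ u ∈ W, t < u ∧ dmin t u = x}.Finite := by
  classical
  set S : Set (ZeroAtInftyContinuousMap T ℝ) := e '' W with hS
  have hSsub : S ⊆ A := by rintro _ ⟨t, ht, rfl⟩; exact hW t ht
  have hSne : S.Nonempty := hne.image e
  obtain ⟨V, hVopen, ⟨y, hyS, hyV⟩, hdiam⟩ := hfrag S hSsub hSne
  obtain ⟨t, htW, rfl⟩ := hyS
  have hbd : Bornology.IsBounded (S ∩ V) := by
    have h1 : S ∩ V ⊆ Metric.closedBall 0 1 := by
      rintro z ⟨⟨s, _, rfl⟩, _⟩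
      simpa [Metric.mem_closedBall, dist_zero_right] using norm_e_le_one s
    exact (Metric.isBounded_closedBall).subset h1
  have hsing : ∀ s ∈ W, e s ∈ V → s = t := by
    intro s hs hsV
    by_contra hne'
    have h1 : (1:ℝ) ≤ dist (e s) (e t) := one_le_dist_e hne'
    have h2 : dist (e s) (e t) ≤ Metric.diam (S ∩ V) :=
      Metric.dist_le_diam_of_mem hbd ⟨⟨s, hs, rfl⟩, hsV⟩ ⟨⟨t, htW, rfl⟩, hyV⟩
    linarith
  refine ⟨t, htW, ?_⟩
  by_contra hinf
  have hInf : {x : T | ∃ u ∈ W, t < u ∧ dmin t u = x}.Infinite := hinf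
  set emb := hInf.natEmbedding with hemb
  have hch : ∀ k : ℕ, ∃ u, u ∈ W ∧ t < u ∧ dmin t u = (emb k : T) := fun k => (emb k).2
  choose u huW htu hud using hch
  have hdisj : ∀ k j : ℕ, k ≠ j → dmin t (u k) ≠ dmin t (u j) := by
    intro k j hkj hc
    rw [hud k, hud j] at hc
    exact hkj (emb.injective (Subtype.ext hc))
  have hnV : ∀ k, e (u k) ∉ V := by
    intro k hc
    have := hsing (u k) (huW k) hc
    exact absurd (this ▸ htu k) (lt_irrefl t)
  obtain ⟨m, φs, δ, hδpos, hball⟩ := weak_nbhd hVopen hyV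
  rcases Nat.eq_zero_or_pos m with rfl | hm
  · exact hnV 0 (hball _ (fun i => Fin.elim0 i))
  have hchoice : ∀ k : ℕ, ∃ i : Fin m, δ i ≤ |φs i (e (u k) - e t)| := by
    intro k
    by_contra hcon
    push_neg at hcon
    have hch2 : ∀ i : Fin m, |φs i (e (u k)) - φs i (e t)| < δ i := by
      intro i
      rw [← map_sub]
      exact hcon i
    exact hnV k (hball _ hch2)
  choose c hc using hchoice
  obtain ⟨i₀, hfib⟩ := Finite.exists_infinite_fiber c
  have hfibInf : (c ⁻¹' {i₀} : Set ℕ).Infinite := Set.infinite_coe_iff.1 hfib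
  set N := Nat.floor (‖φs i₀‖ / δ i₀) + 1 with hN
  obtain ⟨K, hKsub, hKcard⟩ := hfibInf.exists_subset_card_eq N
  have hKc : ∀ k ∈ K, c k = i₀ := fun k hk => hKsub hk
  have hsum_ge : (N : ℝ) * δ i₀ ≤ ∑ k ∈ K, |φs i₀ (e (u k) - e t)| := by
    have h1 : ∀ k ∈ K, δ i₀ ≤ |φs i₀ (e (u k) - e t)| := by
      intro k hk
      have := hc k
      rwa [hKc k hk] at this
    have h2 := Finset.card_nsmul_le_sum K (fun k => |φs i₀ (e (u k) - e t)|) (δ i₀) h1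
    rwa [hKcard, nsmul_eq_mul] at h2
  have hsum_le : ∑ k ∈ K, |φs i₀ (e (u k) - e t)| ≤ ‖φs i₀‖ :=
    l1_estimate t K u (fun k _ => htu k) (fun k _ j _ hkj => hdisj k j hkj) (φs i₀)
  have hgt : ‖φs i₀‖ < (N : ℝ) * δ i₀ := by
    have h3 : ‖φs i₀‖ / δ i₀ < (N : ℝ) := by
      rw [hN]
      push_cast
      exact Nat.lt_floor_add_one _
    rwa [div_lt_iff₀ (hδpos i₀)] at h3
  linarith

end TreeProof

namespace TreeProof
attribute [local instance 10] Classical.propDecidable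
variable {T : Type u} [TreeOrder T]

/-- Certificates of goodness: a point `t` is certified (relative to `D` and `f`) if there
are a finite set `F` and `η > 0` such that every point of `D` above `t`, with `f`-value
within `η`, and avoiding all directions through `F`, is itself certified. -/
inductive CertT (D : Set T) (f : T → ℝ) : T → Type u where
  | intro (t : T) (F : Finset T) (η : ℝ) (hη : 0 < η)
      (h : ∀ u, u ∈ D → t < u → f u < f t + η → (∀ s ∈ F, ¬(t < s ∧ s ≤ u)) → CertT D f u) :
      CertT D f t

noncomputable def height {D : Set T} {f : T → ℝ} : ∀ {t : T}, CertT D f t → Ordinal.{u}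
  | t, .intro _ F η _ h =>
    ⨆ x : {u : T // u ∈ D ∧ t < u ∧ f u < f t + η ∧ ∀ s ∈ F, ¬(t < s ∧ s ≤ u)},
      Order.succ (height (h x.1 x.2.1 x.2.2.1 x.2.2.2.1 x.2.2.2.2))

noncomputable def rank (D : Set T) (f : T → ℝ) (t : T) : Ordinal.{u} :=
  sInf {o | ∃ d : CertT D f t, height d = o}

lemma rank_spec {D : Set T} {f : T → ℝ} {t : T} (h : Nonempty (CertT D f t)) :
    ∃ d : CertT D f t, height d = rank D f t := by
  have hne : {o | ∃ d : CertT D f t, height d = o}.Nonempty :=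
    ⟨height h.some, h.some, rfl⟩
  exact csInf_mem hne

lemma rank_le_height {D : Set T} {f : T → ℝ} {t : T} (d : CertT D f t) :
    rank D f t ≤ height d :=
  csInf_le (OrderBot.bddBelow _) ⟨d, rfl⟩

/-- extraction of certificate data at a point of minimal rank -/
lemma exists_cert_data {D : Set T} {f : T → ℝ} {t : T} (h : Nonempty (CertT D f t)) :
    ∃ (F : Finset T) (η : ℝ), 0 < η ∧
      ∀ u, u ∈ D → t < u → f u < f t + η → (∀ s ∈ F, ¬(t < s ∧ s ≤ u)) →
        rank D f u < rank D f t := by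
  obtain ⟨d, hd⟩ := rank_spec h
  cases d with
  | intro _ F η hη hstep =>
    refine ⟨F, η, hη, fun u h1 h2 h3 h4 => ?_⟩
    have hle : rank D f u ≤ height (hstep u h1 h2 h3 h4) := rank_le_height _
    have hlt : height (hstep u h1 h2 h3 h4) < height (CertT.intro t F η hη hstep) := by
      have hsucc : Order.succ (height (hstep u h1 h2 h3 h4)) ≤
          height (CertT.intro t F η hη hstep) := by
        have := le_ciSup (Ordinal.bddAbove_range
          (fun x : {u : T // u ∈ D ∧ t < u ∧ f u < f t + η ∧ ∀ s ∈ F, ¬(t < s ∧ s ≤ u)} =>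
            Order.succ (height (hstep x.1 x.2.1 x.2.2.1 x.2.2.2.1 x.2.2.2.2))))
          (⟨u, h1, h2, h3, h4⟩ : {u : T // u ∈ D ∧ t < u ∧ f u < f t + η ∧
            ∀ s ∈ F, ¬(t < s ∧ s ≤ u)})
        exact this
      exact lt_of_lt_of_le (Order.lt_succ _) hsucc
    rw [← hd]
    exact lt_of_le_of_lt hle hlt

/-- all points of a hereditarily slim set are certified -/
lemma cert_of_slim {D : Set T} {f : T → ℝ}
    (hslim : ∀ W, W ⊆ D → W.Nonempty →
      ∃ t ∈ W, {x : T | ∃ u ∈ W, t < u ∧ dmin t u = x}.Finite) :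
    ∀ t ∈ D, Nonempty (CertT D f t) := by
  by_contra hcon
  push_neg at hcon
  obtain ⟨t₀, ht₀D, ht₀⟩ := hcon
  set W : Set T := {t ∈ D | ¬ Nonempty (CertT D f t)} with hW
  have hWne : W.Nonempty := ⟨t₀, ht₀D, fun hc => (not_nonempty_iff.2 ht₀) hc⟩
  obtain ⟨t, htW, htfin⟩ := hslim W (fun x hx => hx.1) hWne
  refine htW.2 ⟨CertT.intro t htfin.toFinset 1 one_pos (fun u huD hlt _ hF => ?_)⟩
  have huW : u ∉ W := by
    intro huW
    refine hF (dmin t u) ?_ ⟨(dmin_mem hlt).1, (dmin_mem hlt).2⟩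
    rw [Set.Finite.mem_toFinset]
    exact ⟨u, huW, hlt, rfl⟩
  have : Nonempty (CertT D f u) := by
    by_contra hc
    exact huW ⟨huD, hc⟩
  exact Classical.choice this

/-- an infinite well-founded chain contains a strictly increasing sequence -/
lemma exists_strictMono_seq {S : Set T} (hS : S.Infinite) (hwf : S.IsWF)
    (hchain : ∀ a ∈ S, ∀ b ∈ S, a ≤ b ∨ b ≤ a) :
    ∃ g : ℕ → T, (∀ k, g k ∈ S) ∧ StrictMono g := by
  classical
  have hkey : ∀ K : Finset T, (S \ K).Nonempty := fun K =>
    (hS.diff K.finite_toSet).nonempty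
  have hwf' : ∀ K : Finset T, (S \ (K : Set T)).IsWF := fun K =>
    hwf.mono Set.diff_subset
  set A : ℕ → Finset T := fun k => Nat.rec ∅
    (fun k Ak => insert ((hwf' Ak).min (hkey Ak)) Ak) k with hA
  have hA0 : A 0 = ∅ := rfl
  have hAsucc : ∀ k, A (k+1) = insert ((hwf' (A k)).min (hkey (A k))) (A k) := fun k => rfl
  set g : ℕ → T := fun k => (hwf' (A k)).min (hkey (A k)) with hg
  have hgS : ∀ k, g k ∈ S := fun k => (Set.mem_diff _).1 ((hwf' (A k)).min_mem (hkey (A k))) |>.1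
  have hgA : ∀ k, g k ∉ (A k : Set T) := fun k =>
    (Set.mem_diff _).1 ((hwf' (A k)).min_mem (hkey (A k))) |>.2
  have hgmemA : ∀ k, g k ∈ (A (k+1) : Set T) := by
    intro k
    rw [hAsucc k]
    simp [hg]
  have hmono : ∀ k, A k ⊆ A (k+1) := by
    intro k
    rw [hAsucc k]
    exact Finset.subset_insert _ _
  have hlt : ∀ k, g k < g (k+1) := by
    intro k
    have h1 : g (k+1) ∈ S \ (A (k+1) : Set T) := (hwf' (A (k+1))).min_mem (hkey (A (k+1)))
    have h2 : g (k+1) ∈ S \ (A k : Set T) := ⟨h1.1, fun hc => h1.2 (hmono k hc)⟩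
    have h3 : ¬ g (k+1) < g k := (hwf' (A k)).not_lt_min (hkey (A k)) h2
    have h4 : g k ≠ g (k+1) := by
      intro hc
      exact h1.2 (hc ▸ hgmemA k)
    rcases hchain (g k) (hgS k) (g (k+1)) (hgS (k+1)) with hcmp | hcmp
    · exact lt_of_le_of_ne hcmp h4
    · exact absurd (lt_of_le_of_ne hcmp (Ne.symm h4)) h3
  exact ⟨g, hgS, strictMono_nat_of_lt_succ hlt⟩

end TreeProof

namespace TreeProof
attribute [local instance 10] Classical.propDecidable
variable {T : Type u} [TreeOrder T]

lemma no_descending (r : ℕ → Ordinal.{u}) (hdec : ∀ k, r (k+1) < r k) : False := by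
  obtain ⟨o, ho1, ho2⟩ := Ordinal.lt_wf.has_min (Set.range r) ⟨r 0, 0, rfl⟩
  obtain ⟨k₀, rfl⟩ := ho1
  exact ho2 (r (k₀+1)) ⟨k₀+1, rfl⟩ (hdec k₀)

lemma sigma_antichain_of_slim (f : T → ℝ) (hf : StrictMono f) (D : Set T)
    (hslim : ∀ W, W ⊆ D → W.Nonempty →
      ∃ t ∈ W, {x : T | ∃ u ∈ W, t < u ∧ dmin t u = x}.Finite) :
    ∃ B : ℕ → Set T, (∀ n, ∀ s ∈ B n, ∀ t ∈ B n, ¬ s < t) ∧ D ⊆ ⋃ n, B n := by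
  classical
  have hcert : ∀ t ∈ D, Nonempty (CertT D f t) := cert_of_slim hslim
  have hdata : ∀ t, t ∈ D → ∃ (F : Finset T) (η : ℝ), 0 < η ∧
      ∀ u, u ∈ D → t < u → f u < f t + η → (∀ s ∈ F, ¬(t < s ∧ s ≤ u)) →
        rank D f u < rank D f t := fun t ht => exists_cert_data (hcert t ht)
  choose! F η hη hstep using hdata
  set μ : T → ℝ := fun t => if h : ((F t).filter (fun s => t < s)).Nonempty
    then ((F t).filter (fun s => t < s)).inf' h (fun s => f s - f t) else 1 with hμ
  have hμpos : ∀ t, 0 < μ t := by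
    intro t
    simp only [hμ]
    by_cases h : ((F t).filter (fun s => t < s)).Nonempty
    · rw [dif_pos h, Finset.lt_inf'_iff]
      intro s hs
      rw [Finset.mem_filter] at hs
      have := hf hs.2
      linarith
    · rw [dif_neg h]; exact one_pos
  have hμle : ∀ t, ∀ s ∈ F t, t < s → μ t ≤ f s - f t := by
    intro t s hs hlt
    have hmem : s ∈ (F t).filter (fun s => t < s) := Finset.mem_filter.2 ⟨hs, hlt⟩
    have hne : ((F t).filter (fun s => t < s)).Nonempty := ⟨s, hmem⟩
    simp only [hμ]
    rw [dif_pos hne]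
    exact Finset.inf'_le _ hmem
  set P : ℕ → ℤ → ℕ → ℤ → Set T := fun m i l j =>
    {t | t ∈ D ∧ 1/((m:ℝ)+1) < η t ∧
      f t ∈ Set.Ico ((i:ℝ)/((m:ℝ)+1)) (((i:ℝ)+1)/((m:ℝ)+1)) ∧
      1/((l:ℝ)+1) < μ t ∧
      f t ∈ Set.Ico ((j:ℝ)/((l:ℝ)+1)) (((j:ℝ)+1)/((l:ℝ)+1))} with hP
  have hrk : ∀ m i l j, ∀ t ∈ P m i l j, ∀ t' ∈ P m i l j, t < t' →
      rank D f t' < rank D f t := by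
    intro m i l j t ht t' ht' hlt
    obtain ⟨htD, htη, ⟨hti1, hti2⟩, htμ, ⟨htj1, htj2⟩⟩ := ht
    obtain ⟨ht'D, _, ⟨ht'i1, ht'i2⟩, _, ⟨ht'j1, ht'j2⟩⟩ := ht'
    have hdm : ((i:ℝ)+1)/((m:ℝ)+1) - (i:ℝ)/((m:ℝ)+1) = 1/((m:ℝ)+1) := by ring
    have hdl : ((j:ℝ)+1)/((l:ℝ)+1) - (j:ℝ)/((l:ℝ)+1) = 1/((l:ℝ)+1) := by ring
    have hwin : f t' < f t + η t := by
      have h1 : f t' - f t < 1/((m:ℝ)+1) := by linarith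
      linarith
    refine hstep t htD t' ht'D hlt hwin ?_
    intro s hsF hc
    obtain ⟨hts, hst'⟩ := hc
    have h1 : μ t ≤ f s - f t := hμle t s hsF hts
    have h2 : f s ≤ f t' := hf.monotone hst'
    have h3 : f t' - f t < 1/((l:ℝ)+1) := by linarith
    linarith
  have hfin : ∀ m i l j, ∀ t, t ∈ P m i l j → {s | s ∈ P m i l j ∧ s < t}.Finite := by
    intro m i l j t _
    by_contra hc
    have hS : {s | s ∈ P m i l j ∧ s < t}.Infinite := hc
    have hsub : {s | s ∈ P m i l j ∧ s < t} ⊆ {x | x < t} := fun x hx => hx.2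
    have hwf : {s | s ∈ P m i l j ∧ s < t}.IsWF := (TreeOrder.isWF_lt t).mono hsub
    have hchain : ∀ a ∈ {s | s ∈ P m i l j ∧ s < t}, ∀ b ∈ {s | s ∈ P m i l j ∧ s < t},
        a ≤ b ∨ b ≤ a := fun a ha b hb => comp_of_le ha.2.le hb.2.le
    obtain ⟨g, hgS, hgmono⟩ := exists_strictMono_seq hS hwf hchain
    refine no_descending (fun k => rank D f (g k)) (fun k => ?_)
    exact hrk m i l j (g k) (hgS k).1 (g (k+1)) (hgS (k+1)).1 (hgmono (Nat.lt_succ_self k))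
  set Bfun : ℕ × ℤ × ℕ × ℤ × ℕ → Set T := fun q =>
    {t | t ∈ P q.1 q.2.1 q.2.2.1 q.2.2.2.1 ∧
      {s | s ∈ P q.1 q.2.1 q.2.2.1 q.2.2.2.1 ∧ s < t}.ncard = q.2.2.2.2} with hB
  have hanti : ∀ q, ∀ a ∈ Bfun q, ∀ b ∈ Bfun q, ¬ a < b := by
    rintro ⟨m, i, l, j, k⟩ a ha b hb hab
    obtain ⟨haP, hak⟩ := ha
    obtain ⟨hbP, hbk⟩ := hb
    have hssub : {s | s ∈ P m i l j ∧ s < a} ⊂ {s | s ∈ P m i l j ∧ s < b} := by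
      constructor
      · intro x hx; exact ⟨hx.1, hx.2.trans hab⟩
      · intro hcon
        exact absurd (hcon ⟨haP, hab⟩).2 (lt_irrefl a)
    have hlt := Set.ncard_lt_ncard hssub (hfin m i l j b hbP)
    rw [hak, hbk] at hlt
    exact lt_irrefl _ hlt
  have hcov : ∀ t ∈ D, ∃ q : ℕ × ℤ × ℕ × ℤ × ℕ, t ∈ Bfun q := by
    intro t ht
    obtain ⟨m, hm⟩ := exists_nat_gt (1/(η t))
    have hηt : 0 < η t := hη t ht
    have hmη : 1/((m:ℝ)+1) < η t := by
      rw [div_lt_iff₀ (by positivity)]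
      rw [div_lt_iff₀ hηt] at hm
      nlinarith
    obtain ⟨l, hl⟩ := exists_nat_gt (1/(μ t))
    have hμt : 0 < μ t := hμpos t
    have hlμ : 1/((l:ℝ)+1) < μ t := by
      rw [div_lt_iff₀ (by positivity)]
      rw [div_lt_iff₀ hμt] at hl
      nlinarith
    set i := ⌊f t * ((m:ℝ)+1)⌋ with hi
    set j := ⌊f t * ((l:ℝ)+1)⌋ with hj
    have hiw : f t ∈ Set.Ico ((i:ℝ)/((m:ℝ)+1)) (((i:ℝ)+1)/((m:ℝ)+1)) := by
      constructor
      · rw [div_le_iff₀ (by positivity)]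
        exact Int.floor_le _
      · rw [lt_div_iff₀ (by positivity)]
        exact Int.lt_floor_add_one _
    have hjw : f t ∈ Set.Ico ((j:ℝ)/((l:ℝ)+1)) (((j:ℝ)+1)/((l:ℝ)+1)) := by
      constructor
      · rw [div_le_iff₀ (by positivity)]
        exact Int.floor_le _
      · rw [lt_div_iff₀ (by positivity)]
        exact Int.lt_floor_add_one _
    have htP : t ∈ P m i l j := ⟨ht, hmη, hiw, hlμ, hjw⟩
    exact ⟨(m, i, l, j, {s | s ∈ P m i l j ∧ s < t}.ncard), htP, rfl⟩
  refine ⟨fun n => Bfun ((Denumerable.eqv (ℕ × ℤ × ℕ × ℤ × ℕ)).symm n),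
    fun n => hanti _, fun t ht => ?_⟩
  obtain ⟨q, hq⟩ := hcov t ht
  refine Set.mem_iUnion.2 ⟨Denumerable.eqv (ℕ × ℤ × ℕ × ℤ × ℕ) q, ?_⟩
  rw [Equiv.symm_apply_apply]
  exact hq

end TreeProof

namespace TreeProof
attribute [local instance 10] Classical.propDecidable
variable {T : Type u} [TreeOrder T]

lemma dyadic_lt {X Y : Finset ℕ} {n₀ : ℕ} (hY : n₀ ∈ Y) (hX : n₀ ∉ X)
    (hagree : ∀ m, m < n₀ → (m ∈ X ↔ m ∈ Y)) :
    ∑ n ∈ X, (2:ℚ)⁻¹^n < ∑ n ∈ Y, (2:ℚ)⁻¹^n := by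
  classical
  have hsplitX := Finset.sum_filter_add_sum_filter_not X (fun m => m < n₀) (fun n => (2:ℚ)⁻¹^n)
  have hsplitY := Finset.sum_filter_add_sum_filter_not Y (fun m => m < n₀) (fun n => (2:ℚ)⁻¹^n)
  have heq : X.filter (fun m => m < n₀) = Y.filter (fun m => m < n₀) := by
    ext m
    simp only [Finset.mem_filter]
    constructor
    · rintro ⟨h1, h2⟩; exact ⟨(hagree m h2).1 h1, h2⟩
    · rintro ⟨h1, h2⟩; exact ⟨(hagree m h2).2 h1, h2⟩
  -- tail of X is strictly less than 2⁻¹^n₀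
  have htail : ∑ n ∈ X.filter (fun m => ¬ m < n₀), (2:ℚ)⁻¹^n < (2:ℚ)⁻¹^n₀ := by
    set M := X.sup id with hM
    have hsub : X.filter (fun m => ¬ m < n₀) ⊆ Finset.Ico (n₀+1) (M+1) := by
      intro m hm
      rw [Finset.mem_filter] at hm
      rw [Finset.mem_Ico]
      constructor
      · have hne : m ≠ n₀ := fun hc => hX (hc ▸ hm.1)
        omega
      · have := Finset.le_sup (f := id) hm.1
        simp only [id] at this
        omega
    have h1 : ∑ n ∈ X.filter (fun m => ¬ m < n₀), (2:ℚ)⁻¹^n ≤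
        ∑ n ∈ Finset.Ico (n₀+1) (M+1), (2:ℚ)⁻¹^n := by
      refine Finset.sum_le_sum_of_subset_of_nonneg hsub (fun i _ _ => by positivity)
    rcases Nat.lt_or_ge M (n₀+1) with hMn | hMn
    · have : Finset.Ico (n₀+1) (M+1) = ∅ := by
        apply Finset.Ico_eq_empty
        omega
      rw [this] at h1
      simp only [Finset.sum_empty] at h1
      have : (0:ℚ) < (2:ℚ)⁻¹^n₀ := by positivity
      linarith
    · have hgeom : ∑ n ∈ Finset.Ico (n₀+1) (M+1), (2:ℚ)⁻¹^n =
          ((2:ℚ)⁻¹^(M+1) - (2:ℚ)⁻¹^(n₀+1))/((2:ℚ)⁻¹ - 1) := by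
        refine geom_sum_Ico (by norm_num) (by omega)
      rw [hgeom] at h1
      have hpos : (0:ℚ) < (2:ℚ)⁻¹^(M+1) := by positivity
      have hkey : ((2:ℚ)⁻¹^(M+1) - (2:ℚ)⁻¹^(n₀+1))/((2:ℚ)⁻¹ - 1) =
          2*((2:ℚ)⁻¹^(n₀+1)) - 2*((2:ℚ)⁻¹^(M+1)) := by
        field_simp
        ring
      have h2 : 2*((2:ℚ)⁻¹^(n₀+1)) = (2:ℚ)⁻¹^n₀ := by
        rw [pow_succ]
        ring
      rw [hkey, h2] at h1
      linarith
  have hYlb : (2:ℚ)⁻¹^n₀ ≤ ∑ n ∈ Y.filter (fun m => ¬ m < n₀), (2:ℚ)⁻¹^n := by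
    refine Finset.single_le_sum (f := fun n => (2:ℚ)⁻¹^n) (fun i _ => by positivity) ?_
    rw [Finset.mem_filter]
    exact ⟨hY, by omega⟩
  calc ∑ n ∈ X, (2:ℚ)⁻¹^n
      = ∑ n ∈ X.filter (fun m => m < n₀), (2:ℚ)⁻¹^n
        + ∑ n ∈ X.filter (fun m => ¬ m < n₀), (2:ℚ)⁻¹^n := hsplitX.symm
    _ < ∑ n ∈ Y.filter (fun m => m < n₀), (2:ℚ)⁻¹^n + (2:ℚ)⁻¹^n₀ := by
        rw [heq]; linarith
    _ ≤ ∑ n ∈ Y.filter (fun m => m < n₀), (2:ℚ)⁻¹^n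
        + ∑ n ∈ Y.filter (fun m => ¬ m < n₀), (2:ℚ)⁻¹^n := by linarith
    _ = ∑ n ∈ Y, (2:ℚ)⁻¹^n := hsplitY

/-- a tree covered by countably many antichains is ℚ-embeddable -/
lemma qEmbedding_of_antichains (A : ℕ → Set T)
    (hanti : ∀ n, ∀ s ∈ A n, ∀ t ∈ A n, ¬ s < t)
    (hcov : ∀ t : T, ∃ n, t ∈ A n) :
    ∃ g : T → ℚ, StrictMono g := by
  classical
  set c : T → ℕ := fun t => Nat.find (hcov t) with hc
  have hcmem : ∀ t, t ∈ A (c t) := fun t => Nat.find_spec (hcov t)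
  set J : T → Finset ℕ := fun t =>
    (Finset.range (c t + 1)).filter (fun n => ∃ s, s ≤ t ∧ s ∈ A n) with hJ
  refine ⟨fun t => ∑ n ∈ J t, (2:ℚ)⁻¹^n, ?_⟩
  intro s t hst
  dsimp only
  -- key facts
  have hnotbelow : ∀ u, u ≤ s → u ∉ A (c t) := by
    intro u hu huA
    exact hanti (c t) u huA t (hcmem t) (lt_of_le_of_lt hu hst)
  have hctY : c t ∈ J t := by
    rw [hJ]
    simp only [Finset.mem_filter, Finset.mem_range]
    exact ⟨by omega, t, le_rfl, hcmem t⟩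
  have hctX : c t ∉ J s := by
    rw [hJ]
    simp only [Finset.mem_filter, Finset.mem_range, not_and]
    intro _
    rintro ⟨u, hu1, hu2⟩
    exact hnotbelow u hu1 hu2
  -- symmetric difference and its minimum
  set Δ : Finset ℕ := (J s ∪ J t).filter (fun n => ¬ (n ∈ J s ↔ n ∈ J t)) with hΔ
  have hΔne : Δ.Nonempty := by
    refine ⟨c t, ?_⟩
    rw [hΔ, Finset.mem_filter]
    exact ⟨Finset.mem_union_right _ hctY, fun hiff => hctX (hiff.2 hctY)⟩
  set n₀ := Δ.min' hΔne with hn₀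
  have hn₀Δ : n₀ ∈ Δ := Δ.min'_mem hΔne
  have hagree : ∀ m, m < n₀ → (m ∈ J s ↔ m ∈ J t) := by
    intro m hm
    by_contra hcm
    have : m ∈ Δ := by
      rw [hΔ, Finset.mem_filter]
      constructor
      · by_cases h1 : m ∈ J s
        · exact Finset.mem_union_left _ h1
        · by_cases h2 : m ∈ J t
          · exact Finset.mem_union_right _ h2
          · exact absurd (iff_of_false h1 h2) hcm
      · exact hcm
    have := Δ.min'_le m this
    omega
  have hn₀Y : n₀ ∈ J t ∧ n₀ ∉ J s := by
    rw [hΔ, Finset.mem_filter] at hn₀Δ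
    obtain ⟨hmem, hniff⟩ := hn₀Δ
    by_cases h1 : n₀ ∈ J s
    · -- then n₀ ∉ J t; derive contradiction
      exfalso
      have h2 : n₀ ∉ J t := fun h2 => hniff (iff_of_true h1 h2)
      -- n₀ ∈ J s means: n₀ ≤ c s and ∃ u ≤ s ∈ A n₀; then also ∃ u ≤ t
      rw [hJ] at h1
      simp only [Finset.mem_filter, Finset.mem_range] at h1
      obtain ⟨hrange, u, hu1, hu2⟩ := h1
      -- if n₀ ≤ c t then n₀ ∈ J t
      have hgt : c t + 1 ≤ n₀ := by
        by_contra hle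
        refine h2 ?_
        rw [hJ]
        simp only [Finset.mem_filter, Finset.mem_range]
        exact ⟨by omega, u, hu1.trans hst.le, hu2⟩
      -- but c t ∈ Δ and c t < n₀ contradicts minimality
      have hctΔ : c t ∈ Δ := by
        rw [hΔ, Finset.mem_filter]
        exact ⟨Finset.mem_union_right _ hctY, fun hiff => hctX (hiff.2 hctY)⟩
      have := Δ.min'_le (c t) hctΔ
      omega
    · by_cases h2 : n₀ ∈ J t
      · exact ⟨h2, h1⟩
      · exact absurd (iff_of_false h1 h2) hniff
  exact dyadic_lt hn₀Y.1 hn₀Y.2 hagree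

end TreeProof

/-- If `T` is an `ℝ`-embeddable tree such that `C₀(T)` is `σ`-fragmentable, then `T`
is `ℚ`-embeddable (special). -/
theorem special_of_sigmaFragmentable {T : Type u} [TreeOrder T]
    (f : T → ℝ) (hf : StrictMono f)
    (h : SigmaFragmentable (ZeroAtInftyContinuousMap T ℝ)) :
    ∃ g : T → ℚ, StrictMono g := by
  classical
  obtain ⟨A, hAcov, hAfrag⟩ := h (1/2) (by norm_num)
  have hslim : ∀ n : ℕ, ∀ W, W ⊆ {t : T | TreeProof.e t ∈ A n} → W.Nonempty →
      ∃ t ∈ W, {x : T | ∃ u ∈ W, t < u ∧ TreeProof.dmin t u = x}.Finite := by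
    intro n W hW hne
    exact TreeProof.slim_point (A n) (fun S hS hSne => hAfrag n S hS hSne) W
      (fun t ht => hW ht) hne
  have hB : ∀ n : ℕ, ∃ B : ℕ → Set T, (∀ m, ∀ s ∈ B m, ∀ t ∈ B m, ¬ s < t) ∧
      {t : T | TreeProof.e t ∈ A n} ⊆ ⋃ m, B m :=
    fun n => TreeProof.sigma_antichain_of_slim f hf _ (hslim n)
  choose B hBanti hBcov using hB
  set C : ℕ → Set T := fun k =>
    B ((Denumerable.eqv (ℕ × ℕ)).symm k).1 ((Denumerable.eqv (ℕ × ℕ)).symm k).2 with hC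
  refine TreeProof.qEmbedding_of_antichains C (fun k => hBanti _ _) (fun t => ?_)
  have h1 : TreeProof.e t ∈ ⋃ n, A n := by rw [hAcov]; trivial
  obtain ⟨n, hn⟩ := Set.mem_iUnion.1 h1
  have h2 : t ∈ ⋃ m, B n m := hBcov n hn
  obtain ⟨m, hm⟩ := Set.mem_iUnion.1 h2
  refine ⟨Denumerable.eqv (ℕ × ℕ) (n, m), ?_⟩
  rw [hC]
  simp only [Equiv.symm_apply_apply]
  exact hm
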